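/- Let b_n ≥ 0 with ∑ b_n = 1, b_1 ≥ β > 0 and ∑ b_n R^n ≤ L for some R > 1. Then for every real r with 1 < r < R and 1 + 2βr > r^{(log L)/(log R)}, one has b(−r) < 1, where b(z) = ∑ b_n z^n. Consequently, the equation b(z)=1 has no solution on the interval (−r, −1]. -/

import Mathlib

open Real Finset

lemma jensen_bound (b : ℕ → ℝ) (R L : ℝ) (hb : ∀ n, 0 ≤ b n) (hb0 : b 0 = 0)
    (hsum : HasSum b 1) (hR : 1 < R)
    (hbR : Summable fun n => b n * R ^ n) (hL : ∑' n, b n * R ^ n ≤ L)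
    (s : ℝ) (hs1 : 1 ≤ s) (hsR : s < R) :
    ∑' n, b n * s ^ n ≤ L ^ (Real.log s / Real.log R) := by
  have hs0 : (0:ℝ) < s := lt_of_lt_of_le one_pos hs1
  have hR0 : (0:ℝ) < R := lt_trans one_pos hR
  have hRL : R ≤ L := by
    have h1 : ∀ n, b n * R ≤ b n * R ^ n := by
      intro n
      rcases Nat.eq_zero_or_pos n with h | h
      · simp [h, hb0]
      · exact mul_le_mul_of_nonneg_left (le_self_pow₀ hR.le h.ne') (hb n)
    have h2 : (∑' n, b n * R) = R := by
      rw [tsum_mul_right, hsum.tsum_eq, one_mul]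
    calc R = ∑' n, b n * R := h2.symm
      _ ≤ ∑' n, b n * R ^ n := Summable.tsum_le_tsum h1 (hsum.summable.mul_right R) hbR
      _ ≤ L := hL
  have hL1 : (1:ℝ) < L := lt_of_lt_of_le hR hRL
  have hsumS : Summable (fun n => b n * s ^ n) :=
    Summable.of_nonneg_of_le (fun n => mul_nonneg (hb n) (pow_nonneg hs0.le n))
      (fun n => mul_le_mul_of_nonneg_left (pow_le_pow_left₀ hs0.le hsR.le n) (hb n)) hbR
  rcases eq_or_lt_of_le hs1 with h1 | h1
  · -- s = 1
    simp only [← h1, Real.log_one, zero_div, Real.rpow_zero, one_pow, mul_one]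
    exact le_of_eq hsum.tsum_eq
  -- s > 1
  set t : ℝ := Real.log s / Real.log R with ht_def
  have hlogs : 0 < Real.log s := Real.log_pos h1
  have hlogR : 0 < Real.log R := Real.log_pos hR
  have ht0 : 0 < t := div_pos hlogs hlogR
  have ht1 : t < 1 := (div_lt_one hlogR).2 (Real.log_lt_log hs0 hsR)
  set p : ℝ := 1 / t with hp_def
  have hp1 : 1 ≤ p := by rw [hp_def, le_div_iff₀ ht0, one_mul]; exact ht1.le
  have hsp : s ^ p = R := by
    rw [Real.rpow_def_of_pos hs0,
      show Real.log s * p = Real.log R by rw [hp_def, ht_def]; field_simp,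
      Real.exp_log hR0]
  have hLt0 : 0 ≤ L ^ t := Real.rpow_nonneg (by linarith) t
  apply Summable.tsum_le_of_sum_le hsumS
  intro F
  set W : ℝ := ∑ i ∈ F, b i with hW_def
  have hW1 : W ≤ 1 := sum_le_hasSum F (fun i _ => hb i) hsum
  have hW0 : 0 ≤ W := Finset.sum_nonneg (fun i _ => hb i)
  rcases eq_or_lt_of_le hW0 with hW | hW
  · have : ∀ i ∈ F, b i = 0 := by
      rw [← Finset.sum_eq_zero_iff_of_nonneg (fun i _ => hb i)]
      exact hW.symm
    rw [Finset.sum_congr rfl (fun i hi => by rw [this i hi, zero_mul])]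
    simpa using hLt0
  · have hmean := Real.arith_mean_le_rpow_mean F (fun i => b i / W) (fun i => s ^ i)
      (fun i _ => div_nonneg (hb i) hW0) (by rw [← Finset.sum_div, div_self hW.ne'])
      (fun i _ => pow_nonneg hs0.le i) hp1
    have hzp : ∀ i : ℕ, ((s:ℝ) ^ i) ^ p = R ^ i := by
      intro i
      rw [← Real.rpow_natCast s i, ← Real.rpow_mul hs0.le, mul_comm,
        Real.rpow_mul hs0.le, hsp, Real.rpow_natCast]
    simp only [hzp] at hmean
    have h1p : (1:ℝ) / p = t := by
      rw [hp_def, one_div_one_div]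
    rw [h1p] at hmean
    have hdivs : ∀ (x : ℝ), (∑ i ∈ F, b i / W * x ^ i) = (∑ i ∈ F, b i * x ^ i) / W := by
      intro x
      rw [Finset.sum_div]
      exact Finset.sum_congr rfl (fun i _ => by ring)
    rw [hdivs s, hdivs R, div_le_iff₀ hW] at hmean
    set SR : ℝ := ∑ i ∈ F, b i * R ^ i with hSR_def
    have hSR0 : 0 ≤ SR := Finset.sum_nonneg (fun i _ => mul_nonneg (hb i) (pow_nonneg hR0.le i))
    have hSRL : SR ≤ L := le_trans (Summable.sum_le_tsum F
      (fun i _ => mul_nonneg (hb i) (pow_nonneg hR0.le i)) hbR) hL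
    calc (∑ i ∈ F, b i * s ^ i) ≤ (SR / W) ^ t * W := hmean
      _ = SR ^ t * (W ^ (1 - t) : ℝ) := by
          rw [Real.div_rpow hSR0 hW0, Real.rpow_sub hW, Real.rpow_one]
          field_simp
      _ ≤ SR ^ t * 1 := by
          apply mul_le_mul_of_nonneg_left _ (Real.rpow_nonneg hSR0 t)
          exact Real.rpow_le_one hW0 hW1 (by linarith)
      _ = SR ^ t := mul_one _
      _ ≤ L ^ t := Real.rpow_le_rpow hSR0 hSRL ht0.le

lemma key_lemma (b : ℕ → ℝ) (β R L : ℝ) (hb : ∀ n, 0 ≤ b n) (hb0 : b 0 = 0)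
    (hsum : HasSum b 1) (hβ : 0 < β) (hb1 : β ≤ b 1) (hR : 1 < R)
    (hbR : Summable fun n => b n * R ^ n) (hL : ∑' n, b n * R ^ n ≤ L)
    (s : ℝ) (hs1 : 1 ≤ s) (hsR : s < R)
    (hcond : s ^ (Real.log L / Real.log R) < 1 + 2 * β * s) :
    ∑' n : ℕ, b n * (-s) ^ n < 1 := by
  have hs0 : (0:ℝ) < s := lt_of_lt_of_le one_pos hs1
  have hR0 : (0:ℝ) < R := lt_trans one_pos hR
  have hRL : R ≤ L := by
    have h1 : ∀ n, b n * R ≤ b n * R ^ n := by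
      intro n
      rcases Nat.eq_zero_or_pos n with h | h
      · simp [h, hb0]
      · exact mul_le_mul_of_nonneg_left (le_self_pow₀ hR.le h.ne') (hb n)
    have h2 : (∑' n, b n * R) = R := by
      rw [tsum_mul_right, hsum.tsum_eq, one_mul]
    calc R = ∑' n, b n * R := h2.symm
      _ ≤ ∑' n, b n * R ^ n := Summable.tsum_le_tsum h1 (hsum.summable.mul_right R) hbR
      _ ≤ L := hL
  have hL0 : (0:ℝ) < L := by linarith
  have hsumS : Summable (fun n => b n * s ^ n) :=
    Summable.of_nonneg_of_le (fun n => mul_nonneg (hb n) (pow_nonneg hs0.le n))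
      (fun n => mul_le_mul_of_nonneg_left (pow_le_pow_left₀ hs0.le hsR.le n) (hb n)) hbR
  have hsumN : Summable (fun n => b n * (-s) ^ n) := by
    apply Summable.of_norm_bounded hbR
    intro n
    rw [norm_mul, norm_pow, norm_neg, Real.norm_eq_abs, Real.norm_eq_abs,
      abs_of_nonneg (hb n), abs_of_pos hs0]
    exact mul_le_mul_of_nonneg_left (pow_le_pow_left₀ hs0.le hsR.le n) (hb n)
  have hsumI : Summable (fun n : ℕ => if n = 1 then 2 * b 1 * s else 0) :=
    (hasSum_ite_eq 1 (2 * b 1 * s)).summable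
  have hstep : ∑' n, b n * (-s) ^ n ≤ (∑' n, b n * s ^ n) - 2 * b 1 * s := by
    have hle : ∀ n, b n * (-s) ^ n ≤ b n * s ^ n - (if n = 1 then 2 * b 1 * s else 0) := by
      intro n
      rcases eq_or_ne n 1 with h | h
      · subst h; simp; ring_nf; linarith [mul_nonneg (hb 1) hs0.le]
      · rw [if_neg h, sub_zero]
        apply mul_le_mul_of_nonneg_left _ (hb n)
        calc (-s) ^ n ≤ |(-s) ^ n| := le_abs_self _
          _ = s ^ n := by rw [abs_pow, abs_neg, abs_of_pos hs0]
    calc ∑' n, b n * (-s) ^ n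
        ≤ ∑' n, (b n * s ^ n - (if n = 1 then 2 * b 1 * s else 0)) :=
          Summable.tsum_le_tsum hle hsumN (hsumS.sub hsumI)
      _ = (∑' n, b n * s ^ n) - ∑' n, (if n = 1 then 2 * b 1 * s else 0) :=
          Summable.tsum_sub hsumS hsumI
      _ = (∑' n, b n * s ^ n) - 2 * b 1 * s := by rw [tsum_ite_eq]
  have hjensen := jensen_bound b R L hb hb0 hsum hR hbR hL s hs1 hsR
  have hLt : L ^ (Real.log s / Real.log R) = s ^ (Real.log L / Real.log R) := by
    rw [Real.rpow_def_of_pos hL0, Real.rpow_def_of_pos hs0]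
    congr 1
    ring
  have hb1s : β * s ≤ b 1 * s := mul_le_mul_of_nonneg_right hb1 hs0.le
  calc ∑' n, b n * (-s) ^ n ≤ (∑' n, b n * s ^ n) - 2 * b 1 * s := hstep
    _ ≤ s ^ (Real.log L / Real.log R) - 2 * b 1 * s := by rw [← hLt]; linarith
    _ < 1 := by nlinarith

theorem stmt8 (b : ℕ → ℝ) (β R L : ℝ) (hb : ∀ n, 0 ≤ b n) (hb0 : b 0 = 0)
    (hsum : HasSum b 1) (hβ : 0 < β) (hb1 : β ≤ b 1) (hR : 1 < R)
    (hbR : Summable fun n => b n * R ^ n) (hL : ∑' n, b n * R ^ n ≤ L)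
    (r : ℝ) (hr1 : 1 < r) (hrR : r < R)
    (hcond : r ^ (Real.log L / Real.log R) < 1 + 2 * β * r) :
    (∑' n : ℕ, b n * (-r) ^ n < 1) ∧
      ∀ x ∈ Set.Ioc (-r) (-1 : ℝ), ∑' n : ℕ, b n * x ^ n ≠ 1 := by
  have hR0 : (0:ℝ) < R := lt_trans one_pos hR
  have hRL : R ≤ L := by
    have h1 : ∀ n, b n * R ≤ b n * R ^ n := by
      intro n
      rcases Nat.eq_zero_or_pos n with h | h
      · simp [h, hb0]
      · exact mul_le_mul_of_nonneg_left (le_self_pow₀ hR.le h.ne') (hb n)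
    have h2 : (∑' n, b n * R) = R := by
      rw [tsum_mul_right, hsum.tsum_eq, one_mul]
    calc R = ∑' n, b n * R := h2.symm
      _ ≤ ∑' n, b n * R ^ n := Summable.tsum_le_tsum h1 (hsum.summable.mul_right R) hbR
      _ ≤ L := hL
  set c : ℝ := Real.log L / Real.log R with hc_def
  have hc1 : 1 ≤ c := by
    rw [hc_def, le_div_iff₀ (Real.log_pos hR), one_mul]
    exact Real.log_le_log hR0 hRL
  constructor
  · exact key_lemma b β R L hb hb0 hsum hβ hb1 hR hbR hL r hr1.le hrR hcond
  · rintro x ⟨hx1, hx2⟩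
    set s : ℝ := -x with hs_def
    have hxs : x = -s := by rw [hs_def, neg_neg]
    have hs1 : 1 ≤ s := by rw [hs_def]; linarith
    have hsr : s < r := by rw [hs_def]; linarith
    have hcondS : s ^ c < 1 + 2 * β * s := by
      set a : ℝ := (r - s) / (r - 1) with ha_def
      set d : ℝ := (s - 1) / (r - 1) with hd_def
      have hr1' : (0:ℝ) < r - 1 := by linarith
      have ha0 : 0 < a := div_pos (by linarith) hr1'
      have hd0 : 0 ≤ d := div_nonneg (by linarith) hr1'.le
      have had : a + d = 1 := by
        rw [ha_def, hd_def, ← add_div, div_eq_one_iff_eq hr1'.ne']; ring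
      have hads : a * 1 + d * r = s := by
        rw [ha_def, hd_def, mul_one, div_mul_eq_mul_div, ← add_div,
          div_eq_iff hr1'.ne']; ring
      have hconv := (convexOn_rpow hc1).2 (Set.mem_Ici.2 zero_le_one)
        (Set.mem_Ici.2 (by linarith : (0:ℝ) ≤ r)) ha0.le hd0 had
      simp only [smul_eq_mul, hads, Real.one_rpow] at hconv
      have hdr : d * r ^ c ≤ d * (1 + 2 * β * r) := mul_le_mul_of_nonneg_left hcond.le hd0
      nlinarith
    have := key_lemma b β R L hb hb0 hsum hβ hb1 hR hbR hL s hs1 (lt_trans hsr hrR) hcondS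
    rw [hxs]
    exact ne_of_lt this
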